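/- Let n ≥ 1 and k ≥ 0 be integers with (k,n) ≠ (1,1), let h : ℝⁿ → ℂ be a nonzero harmonic polynomial homogeneous of degree k, and set c_{k,n} := 1/(2k+n−2) if (k,n) ≠ (0,2) and c_{0,2} := 0. Then there exists j ∈ {1,…,n} such that the function y ↦ y_j h(y) − c_{k,n} ‖y‖² (∂h/∂y_j)(y) is not identically zero. -/

import Mathlib

noncomputable section

/-- `n`-dimensional Euclidean space. -/
abbrev E (n : ℕ) := EuclideanSpace ℝ (Fin n)

/-- Partial derivative in the `j`-th coordinate direction. -/
noncomputable def pd {n : ℕ} (j : Fin n) (f : E n → ℂ) (y : E n) : ℂ :=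
  fderiv ℝ f y (EuclideanSpace.single j 1)

/-- The Laplacian `Δ = ∑ⱼ ∂²/∂yⱼ²`. -/
noncomputable def lap {n : ℕ} (f : E n → ℂ) (y : E n) : ℂ :=
  ∑ j : Fin n, pd j (pd j f) y

/-- `h : ℝⁿ → ℂ` is a harmonic polynomial, homogeneous of degree `k`:
it is given by a polynomial in the coordinates, `h (t • y) = t^k * h y`,
and `Δ h = 0`. -/
def IsHarmonicHomog {n : ℕ} (k : ℕ) (h : E n → ℂ) : Prop :=
  (∃ p : MvPolynomial (Fin n) ℂ, ∀ y : E n, h y = MvPolynomial.eval (fun j => ((y j : ℝ) : ℂ)) p) ∧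
  (∀ (t : ℝ) (y : E n), h (t • y) = (t : ℂ) ^ k * h y) ∧
  (∀ y : E n, lap h y = 0)

/-- The constant `c_{k,n}`: `1/(2k+n-2)` unless `(k,n) = (0,2)`, where it is `0`. -/
noncomputable def ckn (k n : ℕ) : ℂ :=
  if k = 0 ∧ n = 2 then 0 else 1 / (2 * (k : ℂ) + (n : ℂ) - 2)

/-- Functions given by polynomials in the coordinates are differentiable. -/
lemma poly_diff {n : ℕ} (p : MvPolynomial (Fin n) ℂ) :
    Differentiable ℝ (fun y : E n => MvPolynomial.eval (fun j => ((y j : ℝ) : ℂ)) p) := by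
  induction p using MvPolynomial.induction_on with
  | C a => simpa using differentiable_const a
  | add p q hp hq => simp only [map_add]; exact hp.add hq
  | mul_X p i hp =>
      simp only [MvPolynomial.eval_mul, MvPolynomial.eval_X]
      exact hp.mul (Complex.ofRealCLM.differentiable.comp
        (EuclideanSpace.proj i : E n →L[ℝ] ℝ).differentiable)

lemma sum_single_eq {n : ℕ} (y : E n) :
    ∑ j : Fin n, y j • EuclideanSpace.single j (1:ℝ) = y := by
  ext i
  rw [WithLp.ofLp_sum, Finset.sum_apply]
  simp [EuclideanSpace.single_apply, PiLp.smul_apply, mul_ite, Finset.sum_ite_eq]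

/-- Euler's identity for homogeneous differentiable functions. -/
lemma euler {n k : ℕ} {h : E n → ℂ}
    (hdiff : Differentiable ℝ h)
    (hom : ∀ (t : ℝ) (y : E n), h (t • y) = (t : ℂ) ^ k * h y) (y : E n) :
    ∑ j : Fin n, ((y j : ℝ) : ℂ) * pd j h y = (k : ℂ) * h y := by
  have hline : HasDerivAt (fun t : ℝ => t • y) y 1 := by
    simpa using (hasDerivAt_id (1:ℝ)).smul_const y
  have hD : HasFDerivAt h (fderiv ℝ h y) ((fun t : ℝ => t • y) 1) := by
    simpa using (hdiff y).hasFDerivAt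
  have hcomp : HasDerivAt (fun t : ℝ => h (t • y)) (fderiv ℝ h y y) 1 :=
    hD.comp_hasDerivAt 1 hline
  have hpow : HasDerivAt (fun t : ℝ => ((t:ℂ)) ^ k * h y) ((k : ℂ) * h y) 1 := by
    have h1 : HasDerivAt (fun z : ℂ => z ^ k) ((k:ℂ) * 1 ^ (k-1)) ((1:ℝ):ℂ) := by
      simpa using hasDerivAt_pow k ((1:ℝ):ℂ)
    have := (h1.comp_ofReal).mul_const (h y)
    simpa using this
  have heq : (fun t : ℝ => h (t • y)) = fun t : ℝ => ((t:ℂ)) ^ k * h y :=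
    funext fun t => hom t y
  rw [heq] at hcomp
  have key : fderiv ℝ h y y = (k : ℂ) * h y := hcomp.unique hpow
  calc ∑ j : Fin n, ((y j : ℝ) : ℂ) * pd j h y
      = ∑ j : Fin n, fderiv ℝ h y (y j • EuclideanSpace.single j (1:ℝ)) := by
        refine Finset.sum_congr rfl fun j _ => ?_
        rw [(fderiv ℝ h y).map_smul]
        simp [pd, Complex.real_smul]
    _ = fderiv ℝ h y y := by rw [← map_sum, sum_single_eq]
    _ = (k : ℂ) * h y := key

lemma norm_sq_complex {n : ℕ} (y : E n) :
    ((‖y‖ : ℝ) : ℂ) ^ 2 = ∑ j : Fin n, ((y j : ℝ) : ℂ) ^ 2 := by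
  have hr : ‖y‖ ^ 2 = ∑ j : Fin n, (y j) ^ 2 := by
    rw [EuclideanSpace.norm_eq, Real.sq_sqrt (by positivity)]
    simp [sq_abs]
  calc ((‖y‖ : ℝ) : ℂ) ^ 2 = ((‖y‖ ^ 2 : ℝ) : ℂ) := by push_cast; ring
    _ = ((∑ j : Fin n, (y j) ^ 2 : ℝ) : ℂ) := by rw [hr]
    _ = ∑ j : Fin n, ((y j : ℝ) : ℂ) ^ 2 := by push_cast; ring

/-- For `h` a nonzero harmonic polynomial homogeneous of degree `k` on `ℝⁿ` (`n ≥ 1`,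
`(k,n) ≠ (1,1)`), there is some `j` for which
`y ↦ yⱼ h(y) - c_{k,n} ‖y‖² ∂ⱼh(y)` is not identically zero. -/
theorem stmt6 (n k : ℕ) (hn : 1 ≤ n) (hkn : ¬(k = 1 ∧ n = 1)) (h : E n → ℂ)
    (hh : IsHarmonicHomog k h) (hne : h ≠ 0) :
    ∃ j : Fin n,
      (fun y : E n => ((y j : ℝ) : ℂ) * h y - ckn k n * ((‖y‖ : ℝ) : ℂ) ^ 2 * pd j h y) ≠ 0 := by
  obtain ⟨⟨p, hp⟩, hom, -⟩ := hh
  have hdiff : Differentiable ℝ h := (funext hp : h = _) ▸ poly_diff p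
  by_contra hc
  push_neg at hc
  have main : ∀ y : E n, (1 - ckn k n * (k : ℂ)) * ((‖y‖ : ℝ) : ℂ) ^ 2 * h y = 0 := by
    intro y
    have e1 : ∀ j : Fin n, ((y j : ℝ) : ℂ) * h y
        = ckn k n * ((‖y‖ : ℝ) : ℂ) ^ 2 * pd j h y := by
      intro j
      have := congrFun (hc j) y
      simpa [sub_eq_zero] using this
    have e2 : ((‖y‖ : ℝ) : ℂ) ^ 2 * h y
        = ckn k n * ((‖y‖ : ℝ) : ℂ) ^ 2 * ((k : ℂ) * h y) := by
      calc ((‖y‖ : ℝ) : ℂ) ^ 2 * h y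
          = ∑ j : Fin n, ((y j : ℝ) : ℂ) * (((y j : ℝ) : ℂ) * h y) := by
            rw [norm_sq_complex, Finset.sum_mul]
            exact Finset.sum_congr rfl fun j _ => by ring
        _ = ∑ j : Fin n, ((y j : ℝ) : ℂ) * (ckn k n * ((‖y‖ : ℝ) : ℂ) ^ 2 * pd j h y) :=
            Finset.sum_congr rfl fun j _ => by rw [e1 j]
        _ = ckn k n * ((‖y‖ : ℝ) : ℂ) ^ 2 * ∑ j : Fin n, ((y j : ℝ) : ℂ) * pd j h y := by
            rw [Finset.mul_sum]
            exact Finset.sum_congr rfl fun j _ => by ring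
        _ = ckn k n * ((‖y‖ : ℝ) : ℂ) ^ 2 * ((k : ℂ) * h y) := by rw [euler hdiff hom y]
    linear_combination e2
  -- find a nonzero point where h ≠ 0
  obtain ⟨y₁, hy₁⟩ := Function.ne_iff.mp hne
  have hy₁' : h y₁ ≠ 0 := hy₁
  obtain ⟨y₀, hy₀ne, hy₀⟩ : ∃ y₀ : E n, y₀ ≠ 0 ∧ h y₀ ≠ 0 := by
    by_cases h0 : y₁ = 0
    · subst h0
      have hk0 : k = 0 := by
        by_contra hk
        have := hom 0 0
        rw [smul_zero] at this
        simp [zero_pow hk] at this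
        exact hy₁' this
      refine ⟨EuclideanSpace.single ⟨0, hn⟩ 1, ?_, ?_⟩
      · intro hzero
        have := congrArg (fun v : E n => v ⟨0, hn⟩) hzero
        simp [EuclideanSpace.single_apply] at this
      · have := hom 0 (EuclideanSpace.single ⟨0, hn⟩ 1)
        rw [zero_smul, hk0, pow_zero, one_mul] at this
        rw [← this]; exact hy₁'
    · exact ⟨y₁, h0, hy₁'⟩
  have hnz : ((‖y₀‖ : ℝ) : ℂ) ^ 2 ≠ 0 := by
    have : ‖y₀‖ ≠ 0 := norm_ne_zero_iff.mpr hy₀ne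
    exact pow_ne_zero _ (Complex.ofReal_ne_zero.mpr this)
  have hck : ckn k n * (k : ℂ) = 1 := by
    have := main y₀
    have h1 : 1 - ckn k n * (k : ℂ) = 0 := by
      rcases mul_eq_zero.mp this with h' | h'
      · rcases mul_eq_zero.mp h' with h'' | h''
        · exact h''
        · exact absurd h'' hnz
      · exact absurd h' hy₀
    linear_combination -h1
  -- arithmetic contradiction
  rcases Nat.eq_zero_or_pos k with hk0 | hkpos
  · rw [hk0] at hck; simp at hck
  have hkne : k ≠ 0 := hkpos.ne'
  rw [ckn, if_neg (fun hx => hkne hx.1)] at hck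
  set d : ℂ := 2 * (k : ℂ) + (n : ℂ) - 2 with hd
  by_cases hdz : d = 0
  · rw [hdz] at hck; simp at hck
  · have hkd : (k : ℂ) = d := by field_simp at hck; linear_combination hck
    have h2 : ((k + n : ℕ) : ℂ) = ((2 : ℕ) : ℂ) := by
      push_cast
      linear_combination -hkd + hd.symm - hd.symm
    have h3 : k + n = 2 := Nat.cast_injective h2
    have : k = 1 ∧ n = 1 := by omega
    exact hkn this

end
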